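/- In the Kauffman bracket expansion ⟨P⟩ = Σ_{H⊆D} A^{e(D)-2e(H)}(-A²-A^{-2})^{f(H)-1} over spanning sub-dessins of the all-A dessin D, the coefficient a_{M-l} of A^{e(D)+2v(D)-2-4l} depends only on spanning sub-dessins H with g(H) ≤ l. -/

import Mathlib

open LaurentPolynomial

/-- The coefficient of `Aⁿ` in a Laurent polynomial in `A`. -/
def lcoeff (p : LaurentPolynomial ℤ) (n : ℤ) : ℤ := p.coeff n

/-- In the Kauffman bracket expansion
`⟨P⟩ = Σ_{H⊆D} A^{e(D)-2e(H)} (-A²-A^{-2})^{f(H)-1}` over spanning sub-dessins of the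
all-`A` dessin `D` of a connected link projection, the coefficient `a_{M-l}` of
`A^{e(D)+2v(D)-2-4l}` depends only on spanning sub-dessins `H` with `g(H) ≤ l`:
restricting the state sum to those sub-dessins does not change that coefficient.

The bracket is a Laurent polynomial in `A` (with `T n` denoting `Aⁿ`), and the dessin is
modeled abstractly by its edge set `E`, vertex count `v`, and the component, face and genus
counts `k H`, `fc H`, `g H` of each spanning sub-dessin, related by Euler's formula
`2g(H) = 2k(H) - v(D) + e(H) - f(H)`, with `1 ≤ k H ≤ fc H` and `k H ≤ v`. -/
lemma support_pow_le (m : ℕ) :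
    ∀ x ∈ ((-T 2 - T (-2) : LaurentPolynomial ℤ) ^ m).coeff.support, x ≤ 2 * m := by
  induction m with
  | zero =>
    intro x hx
    simp only [pow_zero] at hx
    have : ((1 : LaurentPolynomial ℤ)).coeff = Finsupp.single 0 1 := rfl
    rw [this] at hx
    have := Finsupp.support_single_subset hx
    simp at this
    simp [this]
  | succ m ih =>
    intro x hx
    rw [pow_succ'] at hx
    have h := AddMonoidAlgebra.support_coeff_mul_subset _ _ hx
    rw [Finset.mem_add] at h
    obtain ⟨a, ha, b, hb, rfl⟩ := h
    have ha2 : a ≤ 2 := by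
      have : (-T 2 - T (-2) : LaurentPolynomial ℤ).coeff
          = Finsupp.single 2 (-1) + Finsupp.single (-2) (-1) := by
        ext n; simp only [AddMonoidAlgebra.coeff_sub, AddMonoidAlgebra.coeff_neg, Finsupp.sub_apply, Finsupp.neg_apply, Finsupp.add_apply, T_apply, Finsupp.single_apply]; split_ifs <;> omega
      rw [this] at ha
      have := Finsupp.support_add ha
      rw [Finset.mem_union] at this
      rcases this with h | h
      · have := Finsupp.support_single_subset h; simp at this; omega
      · have := Finsupp.support_single_subset h; simp at this; omega
    have := ih b hb
    push_cast
    omega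

lemma T_mul_pow_coeff_zero (a n : ℤ) (m : ℕ) (h : a + 2 * m < n) :
    ((T a * (-T 2 - T (-2)) ^ m : LaurentPolynomial ℤ)).coeff n = 0 := by
  rw [T]
  rw [AddMonoidAlgebra.coeff_single_mul_apply]
  rw [one_mul]
  by_contra hne
  have : -a + n ∈ ((-T 2 - T (-2) : LaurentPolynomial ℤ) ^ m).coeff.support :=
    Finsupp.mem_support_iff.mpr hne
  have := support_pow_le m _ this
  omega

theorem coefficient_depends_only_on_low_genus
    (E : Type) [Fintype E] [DecidableEq E] (v : ℕ) (hv : 1 ≤ v)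
    (k fc g : Finset E → ℕ)
    (hEuler : ∀ H : Finset E, (v : ℤ) - H.card + fc H = 2 * k H - 2 * g H)
    (hk1 : ∀ H : Finset E, 1 ≤ k H)
    (hkf : ∀ H : Finset E, k H ≤ fc H)
    (hkv : ∀ H : Finset E, k H ≤ v)
    (l : ℕ) :
    lcoeff (∑ H : Finset E, T ((Fintype.card E : ℤ) - 2 * H.card) *
        (-T 2 - T (-2)) ^ (fc H - 1))
      ((Fintype.card E : ℤ) + 2 * v - 2 - 4 * l) =
    lcoeff (∑ H ∈ Finset.univ.filter fun H : Finset E => g H ≤ l,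
        T ((Fintype.card E : ℤ) - 2 * H.card) *
        (-T 2 - T (-2)) ^ (fc H - 1))
      ((Fintype.card E : ℤ) + 2 * v - 2 - 4 * l) := by

  show _ = _
  unfold lcoeff
  rw [← Finset.sum_filter_add_sum_filter_not Finset.univ (fun H : Finset E => g H ≤ l)]
  rw [AddMonoidAlgebra.coeff_add, Finsupp.add_apply]
  conv_rhs => rw [← add_zero ((∑ H ∈ Finset.univ.filter fun H : Finset E => g H ≤ l,
        T ((Fintype.card E : ℤ) - 2 * H.card) *
        (-T 2 - T (-2)) ^ (fc H - 1) : LaurentPolynomial ℤ).coeff _)]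
  congr 1
  rw [AddMonoidAlgebra.coeff_sum, Finset.sum_apply']
  apply Finset.sum_eq_zero
  intro H hH
  simp only [Finset.mem_filter, not_le] at hH
  apply T_mul_pow_coeff_zero
  have hE := hEuler H
  have h1 := hk1 H
  have h2 := hkf H
  have h3 := hkv H
  have hgl : l < g H := hH.2
  have hfc : 1 ≤ fc H := le_trans h1 h2
  have : ((fc H - 1 : ℕ) : ℤ) = (fc H : ℤ) - 1 := by omega
  rw [this]
  omega
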